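/- arXiv:math/0112273 — 2 statements merged into one kernel-verified Lean document; each statement's English description precedes it below -/
import Mathlib

section
/- For every ε > 0 and every ℓ ∈ ℕ there is n = n(ε, ℓ) ∈ ℕ with the following property: if m ≥ n and (x_i)_{i=1}^m is a normalized block sequence of (e_i) such that ‖Σ_{i=1}^m α_i x_i‖ ≥ (1/(1+ε/2)) Σ_{i=1}^m |α_i| for all real scalars (α_i)_{i=1}^m, then y = (1/m) Σ_{i=1}^m x_i satisfies sup{ Σ_{i=1}^ℓ ‖E_i(y)‖ : E₁ < E₂ < ⋯ < E_ℓ finite subsets of ℕ } ≤ ‖y‖ + ε ≤ 1 + ε. -/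
abbrev c00 : Type := ℕ →₀ ℝ

noncomputable def flog (x : ℝ) : ℝ := Real.logb 2 (x + 1)

noncomputable def supNorm (x : c00) : ℝ := ⨆ i, |x i|

def proj (E : Finset ℕ) (x : c00) : c00 := x.filter (· ∈ E)

def FLt (A B : Finset ℕ) : Prop := ∀ a ∈ A, ∀ b ∈ B, a < b

def IsNormC00 (N : c00 → ℝ) : Prop :=
  (∀ x, N x = 0 ↔ x = 0) ∧ (∀ x y, N (x + y) ≤ N x + N y) ∧
    ∀ (a : ℝ) (x : c00), N (a • x) = |a| * N x

def schSet (N : c00 → ℝ) (x : c00) : Set ℝ :=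
  {s | ∃ n : ℕ, 2 ≤ n ∧ ∃ E : Fin n → Finset ℕ,
    (∀ i j : Fin n, i < j → FLt (E i) (E j)) ∧
    s = (flog n)⁻¹ * ∑ i, N (proj (E i) x)}

def IsSchlumprechtNorm (N : c00 → ℝ) : Prop :=
  IsNormC00 N ∧ ∀ x : c00, IsLUB (insert (supNorm x) (schSet N x)) (N x)

def IsBlockSeq (x : ℕ → c00) : Prop :=
  (∀ n, x n ≠ 0) ∧ ∀ n, ∀ i ∈ (x n).support, ∀ j ∈ (x (n+1)).support, i < j

def SeqEquiv (N : c00 → ℝ) (u v : ℕ → c00) : Prop :=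
  ∃ c : ℝ, 1 ≤ c ∧ ∀ a : ℕ →₀ ℝ,
    (1 / c) * N (a.sum fun i t => t • u i) ≤ N (a.sum fun i t => t • v i) ∧
    N (a.sum fun i t => t • v i) ≤ c * N (a.sum fun i t => t • u i)

lemma proj_apply (E : Finset ℕ) (x : c00) (i : ℕ) :
    proj E x i = if i ∈ E then x i else 0 := Finsupp.filter_apply _ x i

lemma proj_smul (E : Finset ℕ) (c : ℝ) (x : c00) : proj E (c • x) = c • proj E x := by
  ext i
  rw [Finsupp.smul_apply, proj_apply, proj_apply]
  split <;> simp

lemma proj_sum (E : Finset ℕ) (s : Finset ℕ) (f : ℕ → c00) :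
    proj E (∑ j ∈ s, f j) = ∑ j ∈ s, proj E (f j) := by
  ext i
  rw [proj_apply, Finsupp.finset_sum_apply]
  simp only [Finsupp.finset_sum_apply, proj_apply]
  split <;> simp

lemma proj_proj (F E : Finset ℕ) (x : c00) : proj F (proj E x) = proj (F ∩ E) x := by
  ext i; simp only [proj_apply, Finset.mem_inter]
  by_cases h1 : i ∈ F <;> by_cases h2 : i ∈ E <;> simp [h1, h2]

section norm
variable {N : c00 → ℝ}

lemma N_zero (hN : IsSchlumprechtNorm N) : N 0 = 0 := (hN.1.1 0).2 rfl

lemma N_sum_le (hN : IsSchlumprechtNorm N) (s : Finset ℕ) (f : ℕ → c00) :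
    N (∑ i ∈ s, f i) ≤ ∑ i ∈ s, N (f i) := by
  classical
  induction s using Finset.induction with
  | empty => simp [N_zero hN]
  | insert a s h ih =>
    rw [Finset.sum_insert h, Finset.sum_insert h]
    exact le_trans (hN.1.2.1 _ _) (by linarith)

lemma abs_le_supNorm (x : c00) (i : ℕ) : |x i| ≤ supNorm x := by
  apply le_ciSup (f := fun i => |x i|)
  refine ⟨∑ j ∈ x.support, |x j|, ?_⟩
  rintro _ ⟨k, rfl⟩
  by_cases hk : k ∈ x.support
  · exact Finset.single_le_sum (fun j _ => abs_nonneg (x j)) hk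
  · simp only [Finsupp.notMem_support_iff] at hk
    simp only [hk, abs_zero]
    exact Finset.sum_nonneg fun j _ => abs_nonneg (x j)

lemma supNorm_proj_le (E : Finset ℕ) (x : c00) : supNorm (proj E x) ≤ supNorm x := by
  apply ciSup_le
  intro i
  rw [proj_apply]
  split
  · exact abs_le_supNorm x i
  · simpa using (abs_le_supNorm x i).trans' (by simp)

lemma supNorm_le_N (hN : IsSchlumprechtNorm N) (x : c00) : supNorm x ≤ N x :=
  (hN.2 x).1 (Set.mem_insert _ _)

lemma N_proj_le (hN : IsSchlumprechtNorm N) (E : Finset ℕ) (x : c00) :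
    N (proj E x) ≤ N x := by
  apply (hN.2 (proj E x)).2
  intro s hs
  rcases Set.mem_insert_iff.mp hs with rfl | hs
  · exact (supNorm_proj_le E x).trans (supNorm_le_N hN x)
  · obtain ⟨n, hn, E', hE', rfl⟩ := hs
    refine (hN.2 x).1 (Set.mem_insert_iff.mpr (Or.inr ⟨n, hn, fun i => E' i ∩ E, ?_, ?_⟩))
    · intro i j hij a ha b hb
      exact hE' i j hij a (Finset.mem_of_mem_inter_left ha) b (Finset.mem_of_mem_inter_left hb)
    · congr 1
      exact Finset.sum_congr rfl fun i _ => by rw [proj_proj]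

lemma N_nonneg (hN : IsSchlumprechtNorm N) (x : c00) : 0 ≤ N x := by
  have h1 : N (x + (-x)) ≤ N x + N (-x) := hN.1.2.1 x (-x)
  have h2 : N (-x) = N x := by
    have := hN.1.2.2 (-1) x
    simp at this; simpa using this
  simp [N_zero hN, h2] at h1
  linarith

end norm


section blk
variable {N : c00 → ℝ}

lemma blocks_lt (hN : IsSchlumprechtNorm N) (m : ℕ) (x : ℕ → c00)
    (hx1 : ∀ i, i < m → N (x i) = 1)
    (hb : ∀ i, i + 1 < m → ∀ a ∈ (x i).support, ∀ b ∈ (x (i + 1)).support, a < b) :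
    ∀ j', ∀ j, j < j' → j' < m →
      ∀ a ∈ (x j).support, ∀ b ∈ (x j').support, a < b := by
  intro j'
  induction j' with
  | zero => omega
  | succ k ih =>
    intro j hj hm a ha b hb'
    rcases Nat.lt_succ_iff_lt_or_eq.mp hj with h' | rfl
    · have hk : x k ≠ 0 := by
        intro h0
        have h1 := hx1 k (by omega)
        rw [h0, N_zero hN] at h1
        norm_num at h1
      obtain ⟨c, hc⟩ := Finsupp.support_nonempty_iff.mpr hk
      exact (ih j h' (by omega) a ha c hc).trans (hb k (by omega) c hc b hb')
    · exact hb j (by omega) a ha b hb'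

lemma card_sum_le (m l : ℕ) (T : Fin l → Finset ℕ)
    (hsub : ∀ i, T i ⊆ Finset.range m)
    (hord : ∀ i i' : Fin l, i < i' → ∀ j ∈ T i, ∀ j' ∈ T i', j ≤ j') :
    ∑ i, (T i).card ≤ m + l := by
  classical
  set S : Fin l → Finset ℕ := fun i => (T i).filter (fun j => ∃ j' ∈ T i, j < j') with hS
  have hcard : ∀ i, (T i).card ≤ (S i).card + 1 := by
    intro i
    have h1 : (T i).card = (S i).card + ((T i).filter (fun j => ¬ ∃ j' ∈ T i, j < j')).card := by
      rw [hS]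
      exact (Finset.card_filter_add_card_filter_not _).symm
    have h2 : ((T i).filter (fun j => ¬ ∃ j' ∈ T i, j < j')).card ≤ 1 := by
      rw [Finset.card_le_one]
      intro a ha b hb
      simp only [Finset.mem_filter, not_exists, not_and, not_lt] at ha hb
      have := ha.2 b hb.1
      have := hb.2 a ha.1
      omega
    omega
  have hdisj : ∀ i ∈ (Finset.univ : Finset (Fin l)), ∀ i' ∈ Finset.univ, i ≠ i' →
      Disjoint (S i) (S i') := by
    intro i _ i' _ hne
    rw [Finset.disjoint_left]
    intro j hj hj'
    simp only [hS, Finset.mem_filter] at hj hj'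
    obtain ⟨hjT, j2, hj2, hlt⟩ := hj
    obtain ⟨hjT', j2', hj2', hlt'⟩ := hj'
    rcases lt_or_gt_of_ne hne with h | h
    · exact absurd (hord i i' h j2 hj2 j hjT') (by omega)
    · exact absurd (hord i' i h j2' hj2' j hjT) (by omega)
  have hunion : ∑ i, (S i).card = (Finset.univ.biUnion S).card :=
    (Finset.card_biUnion hdisj).symm
  have hm : (Finset.univ.biUnion S).card ≤ m := by
    have : Finset.univ.biUnion S ⊆ Finset.range m := by
      intro j hj
      obtain ⟨i, _, hj⟩ := Finset.mem_biUnion.mp hj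
      exact hsub i (Finset.mem_filter.mp hj).1
    simpa using Finset.card_le_card this
  calc ∑ i, (T i).card ≤ ∑ i, ((S i).card + 1) := Finset.sum_le_sum fun i _ => hcard i
    _ = ∑ i, (S i).card + l := by simp [Finset.sum_add_distrib]
    _ ≤ m + l := by omega

end blk


/-- Lemma 2.3: for every `ε > 0` and `ℓ ∈ ℕ` there is `n` such that
any average `y = (1/m) ∑ᵢ xᵢ` of `m ≥ n` normalized blocks which are
`(1+ε/2)`-equivalent to the `ℓ₁^m` unit basis satisfies
`sup { ∑ᵢ ‖Eᵢ(y)‖ : E₁ < ⋯ < E_ℓ } ≤ ‖y‖ + ε ≤ 1 + ε`. -/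
theorem average_lemma
    (N : c00 → ℝ) (hN : IsSchlumprechtNorm N)
    (ε : ℝ) (hε : 0 < ε) (l : ℕ) :
    ∃ n : ℕ, ∀ m : ℕ, n ≤ m → ∀ x : ℕ → c00,
      (∀ i, i < m → N (x i) = 1) →
      (∀ i, i + 1 < m → ∀ a ∈ (x i).support, ∀ b ∈ (x (i + 1)).support, a < b) →
      (∀ α : ℕ → ℝ, (1 / (1 + ε / 2)) * ∑ i ∈ Finset.range m, |α i| ≤
          N (∑ i ∈ Finset.range m, α i • x i)) →
      (∀ E : Fin l → Finset ℕ, (∀ i j : Fin l, i < j → FLt (E i) (E j)) →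
        ∑ i, N (proj (E i) ((m : ℝ)⁻¹ • ∑ i ∈ Finset.range m, x i)) ≤
          N ((m : ℝ)⁻¹ • ∑ i ∈ Finset.range m, x i) + ε) ∧
      N ((m : ℝ)⁻¹ • ∑ i ∈ Finset.range m, x i) + ε ≤ 1 + ε := by
  classical
  refine ⟨⌈(l : ℝ) / (ε / 2)⌉₊ + 1, ?_⟩
  intro m hm x hx1 hb hα
  have hm1 : 1 ≤ m := by omega
  have hmR : (1 : ℝ) ≤ (m : ℝ) := by exact_mod_cast hm1
  have hm0 : (0 : ℝ) < (m : ℝ) := by linarith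
  have hlm : (l : ℝ) ≤ (ε / 2) * m := by
    have h1 : ((l : ℝ) / (ε / 2)) ≤ (⌈(l : ℝ) / (ε / 2)⌉₊ : ℝ) := Nat.le_ceil _
    have h2 : ((⌈(l : ℝ) / (ε / 2)⌉₊ : ℝ)) ≤ (m : ℝ) := by
      exact_mod_cast Nat.le_of_succ_le hm
    have h3 : (l : ℝ) / (ε / 2) ≤ (m : ℝ) := h1.trans h2
    rw [div_le_iff₀ (by linarith)] at h3
    linarith
  set S : c00 := ∑ i ∈ Finset.range m, x i with hSdef
  have hNy : N ((m : ℝ)⁻¹ • S) = (m : ℝ)⁻¹ * N S := by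
    rw [hN.1.2.2, abs_of_pos (by positivity)]
  -- upper bound: N y ≤ 1
  have hNS_le : N S ≤ m := by
    calc N S ≤ ∑ i ∈ Finset.range m, N (x i) := N_sum_le hN _ _
      _ = ∑ i ∈ Finset.range m, 1 := Finset.sum_congr rfl fun i hi =>
          hx1 i (Finset.mem_range.mp hi)
      _ = m := by simp
  have hy_le_one : N ((m : ℝ)⁻¹ • S) ≤ 1 := by
    rw [hNy]
    calc (m : ℝ)⁻¹ * N S ≤ (m : ℝ)⁻¹ * m := by
          exact mul_le_mul_of_nonneg_left hNS_le (by positivity)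
      _ = 1 := inv_mul_cancel₀ (ne_of_gt hm0)
  -- lower bound: N y ≥ 1/(1+ε/2)
  have hε2 : (0 : ℝ) < 1 + ε / 2 := by linarith
  have hy_ge : 1 / (1 + ε / 2) ≤ N ((m : ℝ)⁻¹ • S) := by
    have h := hα (fun _ => 1)
    simp only [abs_one, Finset.sum_const, Finset.card_range, nsmul_eq_mul, mul_one,
      one_smul] at h
    rw [hNy]
    rw [← hSdef] at h
    calc 1 / (1 + ε / 2) = (m : ℝ)⁻¹ * (1 / (1 + ε / 2) * m) := by
          field_simp
      _ ≤ (m : ℝ)⁻¹ * N S := mul_le_mul_of_nonneg_left h (by positivity)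
  constructor
  · intro E hE
    set T : Fin l → Finset ℕ :=
      fun i => (Finset.range m).filter (fun j => proj (E i) (x j) ≠ 0) with hT
    -- membership of T gives a support point in E i
    have hmemT : ∀ (i : Fin l) (j : ℕ), j ∈ T i →
        j < m ∧ ∃ p ∈ (x j).support, p ∈ E i := by
      intro i j hj
      rw [hT, Finset.mem_filter, Finset.mem_range] at hj
      refine ⟨hj.1, ?_⟩
      obtain ⟨p, hp⟩ := Finsupp.support_nonempty_iff.mpr hj.2
      rw [Finsupp.mem_support_iff, proj_apply] at hp
      by_cases hpE : p ∈ E i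
      · refine ⟨p, ?_, hpE⟩
        rw [Finsupp.mem_support_iff]
        simpa [hpE] using hp
      · simp [hpE] at hp
    have hord : ∀ i i' : Fin l, i < i' → ∀ j ∈ T i, ∀ j' ∈ T i', j ≤ j' := by
      intro i i' hii j hj j' hj'
      obtain ⟨hjm, p, hp, hpE⟩ := hmemT i j hj
      obtain ⟨hjm', p', hp', hpE'⟩ := hmemT i' j' hj'
      by_contra hcon
      push_neg at hcon
      have hpp : p < p' := hE i i' hii p hpE p' hpE'
      have := blocks_lt hN m x hx1 hb j j' hcon hjm p' hp' p hp
      omega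
    have hsub : ∀ i, T i ⊆ Finset.range m := fun i => Finset.filter_subset _ _
    have hcards := card_sum_le m l T hsub hord
    have hNi : ∀ i : Fin l, N (proj (E i) S) ≤ ((T i).card : ℝ) := by
      intro i
      rw [hSdef, proj_sum]
      calc N (∑ j ∈ Finset.range m, proj (E i) (x j))
          ≤ ∑ j ∈ Finset.range m, N (proj (E i) (x j)) := N_sum_le hN _ _
        _ = ∑ j ∈ T i, N (proj (E i) (x j)) := by
            refine (Finset.sum_subset (hsub i) ?_).symm
            intro j hj hnj
            rw [hT, Finset.mem_filter, not_and, not_not] at hnj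
            rw [hnj hj, N_zero hN]
        _ ≤ ∑ j ∈ T i, 1 := by
            refine Finset.sum_le_sum fun j hj => ?_
            have hjm := (hmemT i j hj).1
            calc N (proj (E i) (x j)) ≤ N (x j) := N_proj_le hN _ _
              _ = 1 := hx1 j hjm
        _ = ((T i).card : ℝ) := by simp
    have hmain : ∑ i, N (proj (E i) ((m : ℝ)⁻¹ • S)) ≤ (m : ℝ)⁻¹ * ((m : ℝ) + l) := by
      have h1 : ∀ i : Fin l, N (proj (E i) ((m : ℝ)⁻¹ • S))
          = (m : ℝ)⁻¹ * N (proj (E i) S) := by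
        intro i
        rw [proj_smul, hN.1.2.2, abs_of_pos (by positivity)]
      calc ∑ i, N (proj (E i) ((m : ℝ)⁻¹ • S))
          = (m : ℝ)⁻¹ * ∑ i, N (proj (E i) S) := by
            rw [Finset.mul_sum]; exact Finset.sum_congr rfl fun i _ => h1 i
        _ ≤ (m : ℝ)⁻¹ * ((m : ℝ) + l) := by
            refine mul_le_mul_of_nonneg_left ?_ (by positivity)
            calc ∑ i, N (proj (E i) S) ≤ ∑ i : Fin l, ((T i).card : ℝ) :=
                  Finset.sum_le_sum fun i _ => hNi i
              _ = ((∑ i, (T i).card : ℕ) : ℝ) := by push_cast; ring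
              _ ≤ ((m + l : ℕ) : ℝ) := by exact_mod_cast hcards
              _ = (m : ℝ) + l := by push_cast; ring
    have hfinal : (m : ℝ)⁻¹ * ((m : ℝ) + l) ≤ N ((m : ℝ)⁻¹ • S) + ε := by
      have h1 : (m : ℝ)⁻¹ * ((m : ℝ) + l) = 1 + (l : ℝ) / m := by
        field_simp
      have h2 : (l : ℝ) / m ≤ ε / 2 := by
        rw [div_le_iff₀ hm0]; linarith
      have h3 : 1 - ε / 2 ≤ 1 / (1 + ε / 2) := by
        rw [le_div_iff₀ hε2]; nlinarith
      rw [h1]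
      linarith
    exact hmain.trans hfinal
  · linarith
end

section
/- Let f(x) = log₂(x+1) and let d > 1. For real r ≥ 2 define recursively r₀ = r and r_{k+1} = r_k^{f(r_k)}. Then there exists R > 1 such that for every r ≥ R: f(r_k) > d² for every k ≥ 0, and the infinite product β(r) = Π_{k=0}^∞ (1/(1 − d/√f(r_k))) · (f(9 r_k)/f(r_k)) converges to a finite limit. -/
/-- The recursively defined sequence `r₀ = r`, `r_{k+1} = r_k ^ f(r_k)`. -/
noncomputable def rseq (r : ℝ) : ℕ → ℝ
  | 0 => r
  | k + 1 => rseq r k ^ flog (rseq r k)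

private lemma flog_mono {x y : ℝ} (hx : 0 < x + 1) (h : x ≤ y) : flog x ≤ flog y :=
  Real.logb_le_logb_of_le one_lt_two hx (by linarith)

private lemma sqrt_pow2 : ∀ k : ℕ, Real.sqrt ((2:ℝ) ^ k) = Real.sqrt 2 ^ k := by
  intro k
  induction k with
  | zero => simp
  | succ k ih =>
    rw [pow_succ, pow_succ, Real.sqrt_mul (by positivity), ih]

/-- Key growth lemma: if `r ≥ 2^M` with `M = 4d²+4`, then `r_k ≥ 2` and
`flog r_k ≥ M · 2^k`. -/
private lemma key (d : ℝ) (hd : 1 < d) (r : ℝ) (hr : (2:ℝ) ^ (4*d^2+4) ≤ r) (k : ℕ) :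
    2 ≤ rseq r k ∧ (4*d^2+4) * 2 ^ k ≤ flog (rseq r k) := by
  set M : ℝ := 4*d^2+4 with hM
  have hM8 : (8:ℝ) < M := by nlinarith
  induction k with
  | zero =>
    have h2 : (2:ℝ) ≤ (2:ℝ) ^ M := by
      calc (2:ℝ) = (2:ℝ) ^ (1:ℝ) := (Real.rpow_one 2).symm
      _ ≤ (2:ℝ) ^ M := Real.rpow_le_rpow_of_exponent_le one_le_two (by linarith)
    refine ⟨by simpa [rseq] using le_trans h2 hr, ?_⟩
    have h3 : Real.logb 2 ((2:ℝ) ^ M) ≤ flog r := by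
      apply Real.logb_le_logb_of_le one_lt_two (Real.rpow_pos_of_pos two_pos M)
      unfold flog at *
      linarith
    rw [Real.logb_rpow (by norm_num) (by norm_num)] at h3
    simpa [rseq] using h3
  | succ k ih =>
    obtain ⟨hx2, hF⟩ := ih
    set x := rseq r k with hxdef
    set F := flog x with hFdef
    have h2k : (1:ℝ) ≤ 2 ^ k := one_le_pow₀ one_le_two
    have hFM : M ≤ F := le_trans (by nlinarith) hF
    have hx0 : (0:ℝ) < x := by linarith
    have hF1 : (1:ℝ) ≤ F := by linarith
    have hnext : rseq r (k+1) = x ^ F := rfl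
    constructor
    · rw [hnext]
      calc (2:ℝ) ≤ x := hx2
      _ = x ^ (1:ℝ) := (Real.rpow_one x).symm
      _ ≤ x ^ F := Real.rpow_le_rpow_of_exponent_le (by linarith) hF1
    · rw [hnext]
      have hxF : (0:ℝ) < x ^ F := Real.rpow_pos_of_pos hx0 F
      have h1 : Real.logb 2 (x ^ F) ≤ flog (x ^ F) :=
        Real.logb_le_logb_of_le one_lt_two hxF (by linarith)
      have h2 : Real.logb 2 (x ^ F) = F * Real.logb 2 x :=
        Real.logb_rpow_eq_mul_logb_of_pos hx0
      have h3 : F ≤ 1 + Real.logb 2 x := by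
        have h4 : flog x ≤ Real.logb 2 (2 * x) :=
          Real.logb_le_logb_of_le one_lt_two (by positivity) (by linarith)
        rw [Real.logb_mul (by norm_num) (ne_of_gt hx0),
          Real.logb_self_eq_one one_lt_two] at h4
        linarith
      have h5 : M * 2 ^ (k+1) ≤ F * (F - 1) := by
        have hF1' : (2:ℝ) ≤ F - 1 := by linarith
        have he : M * 2 ^ (k+1) = (M * 2 ^ k) * 2 := by ring
        rw [he]
        exact mul_le_mul hF hF1' (by norm_num) (by linarith)
      calc M * 2 ^ (k+1) ≤ F * (F - 1) := h5
      _ ≤ F * Real.logb 2 x := by nlinarith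
      _ = Real.logb 2 (x ^ F) := h2.symm
      _ ≤ flog (x ^ F) := h1

set_option maxHeartbeats 1000000 in
/-- for any `d > 1` there is `R > 1` such that for all `r ≥ R` the
values `f(r_k)` exceed `d²` and the infinite product
`β(r) = ∏ₖ (1 - d/√f(r_k))⁻¹ · (f(9 r_k)/f(r_k))` converges. -/
theorem beta_product_converges (d : ℝ) (hd : 1 < d) :
    ∃ R : ℝ, 1 < R ∧ ∀ r : ℝ, R ≤ r →
      (∀ k : ℕ, d ^ 2 < flog (rseq r k)) ∧
      Multipliable (fun k : ℕ =>
        (1 - d / Real.sqrt (flog (rseq r k)))⁻¹ *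
          (flog (9 * rseq r k) / flog (rseq r k))) := by
  set M : ℝ := 4*d^2+4 with hM
  have hM8 : (8:ℝ) < M := by nlinarith
  refine ⟨(2:ℝ) ^ M, ?_, fun r hr => ?_⟩
  · rw [Real.one_lt_rpow_iff_of_pos two_pos]; left; exact ⟨one_lt_two, by linarith⟩
  have hkey := key d hd r hr
  have hd2 : ∀ k : ℕ, d ^ 2 < flog (rseq r k) := by
    intro k
    have h2k : (1:ℝ) ≤ 2 ^ k := one_le_pow₀ one_le_two
    have := (hkey k).2
    nlinarith
  refine ⟨hd2, ?_⟩
  set a : ℕ → ℝ := fun k =>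
    (1 - d / Real.sqrt (flog (rseq r k)))⁻¹ *
      (flog (9 * rseq r k) / flog (rseq r k)) with ha
  have hbound : ∀ k : ℕ, 1 ≤ a k ∧ a k ≤ 1 + (10*d+4) / Real.sqrt (M * 2 ^ k) := by
    intro k
    obtain ⟨hx2, hF⟩ := hkey k
    set x := rseq r k with hxdef
    set F := flog x with hFdef
    have h2k : (1:ℝ) ≤ 2 ^ k := one_le_pow₀ one_le_two
    have hFM : M ≤ F := le_trans (by nlinarith) hF
    have hF8 : (8:ℝ) < F := lt_of_lt_of_le hM8 hFM
    have hx0 : (0:ℝ) < x := by linarith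
    set s := Real.sqrt F with hs
    have hs0 : 0 < s := Real.sqrt_pos.mpr (by linarith)
    have hs2 : s ^ 2 = F := Real.sq_sqrt (by linarith)
    have hs2d : 2 * d ≤ s := by
      have h2d : Real.sqrt ((2*d)^2) ≤ s := Real.sqrt_le_sqrt (by nlinarith)
      rwa [Real.sqrt_sq (by linarith)] at h2d
    have hs1 : 1 ≤ s := by linarith
    have hsF : s ≤ F := by nlinarith
    have hds : d / s ≤ 1 / 2 := by
      rw [div_le_div_iff₀ hs0 two_pos]; linarith
    have hpos : 0 < 1 - d / s := by linarith
    have hdiv0 : 0 < d / s := div_pos (by linarith) hs0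
    have hinv1 : 1 ≤ (1 - d / s)⁻¹ := by
      rw [le_inv_comm₀ one_pos hpos]; linarith
    have hinv2 : (1 - d / s)⁻¹ ≤ 1 + 2 * d / s := by
      rw [inv_le_iff_one_le_mul₀ hpos]
      have h1 : d / s * (d / s) ≤ (1/2) * (d/s) :=
        mul_le_mul_of_nonneg_right hds (le_of_lt hdiv0)
      have hexp : (1 + 2 * d / s) * (1 - d / s) = 1 + d/s - 2 * ((d/s) * (d/s)) := by
        field_simp; ring
      rw [hexp]; linarith
    have hF0 : 0 < F := by linarith
    have hratio1 : 1 ≤ flog (9 * x) / F := by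
      rw [le_div_iff₀ hF0, one_mul]
      exact flog_mono (by linarith) (by linarith)
    have hflog9 : flog (9 * x) ≤ F + 4 := by
      have h16 : flog (9 * x) ≤ Real.logb 2 (16 * (x + 1)) :=
        Real.logb_le_logb_of_le one_lt_two (by positivity) (by linarith)
      have heq : Real.logb 2 (16 * (x+1)) = Real.logb 2 16 + Real.logb 2 (x+1) :=
        Real.logb_mul (by norm_num) (by linarith)
      have h16v : Real.logb 2 (16:ℝ) = 4 := by
        have h16e : (16:ℝ) = 2 ^ (4:ℕ) := by norm_num
        rw [h16e, Real.logb_pow, Real.logb_self_eq_one one_lt_two]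
        norm_num
      rw [heq, h16v] at h16
      have : Real.logb 2 (x + 1) = F := rfl
      linarith
    have hratio2 : flog (9 * x) / F ≤ 1 + 4 / s := by
      rw [div_le_iff₀ hF0]
      have he : (1 + 4 / s) * F = F + 4 * (F / s) := by ring
      rw [he]
      have h4 : (1:ℝ) ≤ F / s := by rw [le_div_iff₀ hs0]; nlinarith
      linarith
    constructor
    · calc (1:ℝ) = 1 * 1 := by norm_num
      _ ≤ (1 - d / s)⁻¹ * (flog (9 * x) / F) :=
        mul_le_mul hinv1 hratio1 (by norm_num) (by linarith)
    · have hub : a k ≤ (1 + 2*d/s) * (1 + 4/s) :=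
        mul_le_mul hinv2 hratio2 (by linarith) (by positivity)
      have hexp2 : (1 + 2*d/s) * (1 + 4/s) = 1 + (2*d+4)/s + (8*d)/(s*s) := by
        field_simp; ring
      have hss : (8*d)/(s*s) ≤ (8*d)/s := by
        apply div_le_div_of_nonneg_left (by linarith) hs0
        nlinarith
      have h10 : a k ≤ 1 + (10*d+4)/s := by
        rw [hexp2] at hub
        have he2 : (2*d+4)/s + (8*d)/s = (10*d+4)/s := by ring
        linarith
      have hsqrt : Real.sqrt (M * 2 ^ k) ≤ s := Real.sqrt_le_sqrt hF
      have hsq0 : 0 < Real.sqrt (M * 2 ^ k) := Real.sqrt_pos.mpr (by positivity)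
      have hmono : (10*d+4)/s ≤ (10*d+4)/Real.sqrt (M * 2 ^ k) :=
        div_le_div_of_nonneg_left (by linarith) hsq0 hsqrt
      linarith
  have hsqrt2 : (1:ℝ) < Real.sqrt 2 := by
    have : Real.sqrt 1 < Real.sqrt 2 := Real.sqrt_lt_sqrt (by norm_num) (by norm_num)
    simpa using this
  have hlogsum : Summable fun k => Real.log (a k) := by
    have hgeo : Summable fun k : ℕ => ((10*d+4)/Real.sqrt M) * ((Real.sqrt 2)⁻¹) ^ k := by
      apply Summable.mul_left
      apply summable_geometric_of_lt_one (by positivity)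
      rw [inv_lt_one_iff₀]; right; exact hsqrt2
    apply Summable.of_nonneg_of_le _ _ hgeo
    · intro k; exact Real.log_nonneg (hbound k).1
    · intro k
      obtain ⟨h1, h2⟩ := hbound k
      have hlog := Real.log_le_sub_one_of_pos (show 0 < a k by linarith)
      have hsplit : Real.sqrt (M * 2 ^ k) = Real.sqrt M * Real.sqrt 2 ^ k := by
        rw [Real.sqrt_mul (by positivity), sqrt_pow2]
      have heq : (10*d+4) / Real.sqrt (M * 2 ^ k)
          = ((10*d+4)/Real.sqrt M) * ((Real.sqrt 2)⁻¹) ^ k := by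
        rw [hsplit, inv_pow]
        field_simp
      linarith [heq ▸ h2]
  exact Real.multipliable_of_summable_log
    (fun n => lt_of_lt_of_le one_pos (hbound n).1) hlogsum
end
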